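/- Let m ≥ 1 and define integers K^m_{a,b} for a, b ≥ 0 by the base cases K^m_{a,0} = m+a, K^m_{0,b} = C(m, b+1), K^m_{1,b} = C(m,b) + C(m,b+1), and the recurrence K^m_{a,b} = K^m_{a−2,b−1} + K^m_{a−1,b} for a ≥ 2, b ≥ 1. Then for all a, b ≥ 0, K^m_{a,b} = Σ_{j≥0} C(a+1−j, j)·C(m, b+1−j) = C(a+1,0)·C(m,b+1) + C(a,1)·C(m,b) + C(a−1,2)·C(m,b−1) + ⋯ (a finite sum, since C(a+1−j, j) = 0 for j large). -/

import Mathlib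

/-- The numbers `K^m_{a,b}`, defined by the base cases `K^m_{a,0} = m+a`,
`K^m_{0,b} = C(m,b+1)`, `K^m_{1,b} = C(m,b) + C(m,b+1)`, and the recurrence
`K^m_{a,b} = K^m_{a−2,b−1} + K^m_{a−1,b}` for `a ≥ 2`, `b ≥ 1`. -/
def Kno (m : ℕ) : ℕ → ℕ → ℕ
  | a, 0 => m + a
  | 0, b + 1 => Nat.choose m (b + 2)
  | 1, b + 1 => Nat.choose m (b + 1) + Nat.choose m (b + 2)
  | a + 2, b + 1 => Kno m a b + Kno m (a + 1) (b + 1)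

lemma pascal_trunc (a i : ℕ) :
    Nat.choose (a + 2 - i) (i + 1) = Nat.choose (a + 1 - i) i + Nat.choose (a + 1 - i) (i + 1) := by
  rcases le_or_gt i (a + 1) with h | h
  · rw [show a + 2 - i = (a + 1 - i) + 1 by omega, Nat.choose_succ_succ]
  · have h1 : a + 2 - i = 0 := by omega
    have h2 : a + 1 - i = 0 := by omega
    have h3 : 0 < i := by omega
    simp [h1, h2, Nat.choose_eq_zero_of_lt h3]

/-- The closed form: `K^m_{a,b} = Σ_{j≥0} C(a+1−j, j)·C(m, b+1−j)`
(a finite sum: all terms with `j ≥ b+2` vanish, since then `C(m, b+1−j)` should be `0`;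
summing over `j ∈ [0, b+1]` therefore realizes exactly the intended sum, while the
truncated subtraction in `C(a+1−j, j)` correctly yields `0` whenever `a+1−j < j`). -/
theorem stmt7 (m : ℕ) (hm : 1 ≤ m) :
    ∀ a b : ℕ, Kno m a b =
      ∑ j ∈ Finset.range (b + 2), Nat.choose (a + 1 - j) j * Nat.choose m (b + 1 - j) := by
  intro a b
  induction a, b using Kno.induct with
  | case1 a =>
    simp [Kno, Finset.sum_range_succ, Nat.choose_one_right]
  | case2 b =>
    rw [Kno]
    rw [Finset.sum_eq_single_of_mem 0 (by simp)]
    · simp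
    · intro j hj hj0
      rw [show 0 + 1 - j = 0 by omega, Nat.choose_eq_zero_of_lt (by omega), zero_mul]
  | case3 b =>
    rw [Kno, Finset.sum_range_succ', Finset.sum_range_succ']
    have hz : ∀ i ∈ Finset.range (b + 1),
        Nat.choose (1 + 1 - (i + 1 + 1)) (i + 1 + 1) * Nat.choose m (b + 1 + 1 - (i + 1 + 1)) = 0 := by
      intro i _
      rw [show 1 + 1 - (i + 1 + 1) = 0 by omega, Nat.choose_eq_zero_of_lt (by omega), zero_mul]
    rw [Finset.sum_congr rfl hz, Finset.sum_const_zero]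
    simp [add_comm]
    congr 1
    omega
  | case4 a b ih1 ih2 =>
    rw [Kno, ih1, ih2]
    rw [Finset.sum_range_succ' (fun j => Nat.choose (a + 2 + 1 - j) j * Nat.choose m (b + 1 + 1 - j))]
    rw [Finset.sum_range_succ' (fun j => Nat.choose (a + 1 + 1 - j) j * Nat.choose m (b + 1 + 1 - j))]
    simp only [Nat.sub_zero, Nat.choose_zero_right, one_mul]
    have key : ∀ i, Nat.choose (a + 2 + 1 - (i + 1)) (i + 1) * Nat.choose m (b + 1 + 1 - (i + 1))
        = Nat.choose (a + 1 - i) i * Nat.choose m (b + 1 - i)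
          + Nat.choose (a + 1 + 1 - (i + 1)) (i + 1) * Nat.choose m (b + 1 + 1 - (i + 1)) := by
      intro i
      have e1 : a + 2 + 1 - (i + 1) = a + 2 - i := by omega
      have e2 : b + 1 + 1 - (i + 1) = b + 1 - i := by omega
      have e3 : a + 1 + 1 - (i + 1) = a + 1 - i := by omega
      rw [e1, e2, e3, pascal_trunc, add_mul]
    rw [Finset.sum_congr rfl (fun i _ => key i), Finset.sum_add_distrib]
    ring
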